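/- Let D ⊆ ℂⁿ be a bounded domain containing the origin o, let u and v be Lebesgue measurable functions on D bounded above near o, let g ≥ 0 be Lebesgue measurable on D, and define A_{u,v}(t) := sup{ c ∈ ℝ : g²e^{2(tv - cu)} is integrable near o }. Assume that A_{u,v}(t) is finite, positive and strictly increasing on an interval (t₀-δ, t₀+δ). Then A_{u,v} is concave on (t₀-δ, t₀+δ), the left derivative b₀ := lim_{Δt→0-} (A_{u,v}(t₀+Δt) - A_{u,v}(t₀))/Δt exists, and for any b > 0 one has A_{max{u, (1/b)v}, v}(t₀) = A_{u,v}(t₀) if and only if b ≤ b₀. -/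

import Mathlib

open MeasureTheory Filter Topology
open scoped ENNReal NNReal

noncomputable section

/-- `ℂⁿ`. -/
abbrev Cn (n : ℕ) : Type := Fin n → ℂ

variable {n : ℕ}

/-- The exponential function `EReal → ℝ≥0∞`, with `exp ⊥ = 0` and `exp ⊤ = ⊤`. -/
def expE (x : EReal) : ℝ≥0∞ :=
  if x = ⊥ then 0 else if x = ⊤ then ⊤ else ENNReal.ofReal (Real.exp x.toReal)

/-- The logarithm `ℝ → EReal`, with value `⊥` for `x ≤ 0`. -/
def elog (x : ℝ) : EReal := if x ≤ 0 then (⊥ : EReal) else ((Real.log x : ℝ) : EReal)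

/-- The density `e^{c·φ} : ℂⁿ → [0,∞]` associated to an extended-real-valued `φ`. -/
def wexp (c : ℝ) (φ : Cn n → EReal) (z : Cn n) : ℝ≥0∞ := expE ((c : EReal) * φ z)

/-- `|f₀|² = ∑ⱼ |f₀ⱼ|²` as a `[0,∞]`-valued density, for a tuple `f₀` of functions. -/
def normSq2 {m : ℕ} (f₀ : Fin m → Cn n → ℂ) (z : Cn n) : ℝ≥0∞ :=
  ∑ j, (‖f₀ j z‖₊ : ℝ≥0∞) ^ 2

/-- `log |f₀| = (1/2) log ∑ⱼ |f₀ⱼ|²` for a tuple `f₀`. -/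
def logAbsT {m : ℕ} (f₀ : Fin m → Cn n → ℂ) (z : Cn n) : EReal :=
  elog (Real.sqrt (∑ j, ‖f₀ j z‖ ^ 2))

/-- The weight `|f₀|² e^{-2φ₀}`. -/
def dens0 {m : ℕ} (f₀ : Fin m → Cn n → ℂ) (φ₀ : Cn n → EReal) (z : Cn n) : ℝ≥0∞ :=
  normSq2 f₀ z * wexp (-2) φ₀ z

/-- A nonnegative function is (Lebesgue-)integrable near the origin. -/
def IntNear (g : Cn n → ℝ≥0∞) : Prop := ∃ U ∈ 𝓝 (0 : Cn n), (∫⁻ z in U, g z) < ⊤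

/-- `ψ ≤ φ + O(1)` near the origin. -/
def leO (ψ φ : Cn n → EReal) : Prop := ∃ C : ℝ, ∀ᶠ z in 𝓝 (0 : Cn n), ψ z ≤ φ z + (C : EReal)

/-- `ψ = φ + O(1)` near the origin. -/
def eqO (ψ φ : Cn n → EReal) : Prop := leO ψ φ ∧ leO φ ψ

/-- The truncated average of `u` over the circle `θ ↦ z + r e^{iθ} w`, truncated below at `-m`. -/
def circleAvg (u : Cn n → EReal) (z w : Cn n) (r : ℝ) (m : ℕ) : ℝ :=
  (2 * Real.pi)⁻¹ * ∫ θ in (0:ℝ)..(2 * Real.pi),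
    (max (u (z + ((r : ℂ) * Complex.exp (Complex.I * (θ : ℂ))) • w)) ((-(m : ℝ) : ℝ) : EReal)).toReal

/-- `u` is plurisubharmonic on `Ω`: it is upper semicontinuous on `Ω`, takes values in
`[-∞, ∞)`, is not identically `-∞` on any connected component of `Ω`, and satisfies the
sub-mean value inequality on all small circles inside complex lines. -/
structure PSHOn (u : Cn n → EReal) (Ω : Set (Cn n)) : Prop where
  usc : UpperSemicontinuousOn u Ω
  lt_top : ∀ z ∈ Ω, u z < ⊤
  not_botOnComponents : ∀ z ∈ Ω, ∃ w ∈ connectedComponentIn Ω z, u w ≠ ⊥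
  submean : ∀ z ∈ Ω, ∀ w : Cn n, ∃ ε > 0, ∀ r : ℝ, 0 < r → r < ε →
    u z ≤ ⨅ m : ℕ, ((circleAvg u z w r m : ℝ) : EReal)

/-- `u` is plurisubharmonic near the origin. -/
def PSHNear (u : Cn n → EReal) : Prop := ∃ U ∈ 𝓝 (0 : Cn n), IsOpen U ∧ PSHOn u U

/-- `f` is holomorphic near the origin. -/
def HoloNear (f : Cn n → ℂ) : Prop := ∃ U ∈ 𝓝 (0 : Cn n), IsOpen U ∧ DifferentiableOn ℂ f U

/-- `Φ` is a (local) Zhou weight near the origin related to a general nonnegative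
weight `W`. -/
structure IsZhouWeightFor (W : Cn n → ℝ≥0∞) (Φ : Cn n → EReal) : Prop where
  psh : PSHNear Φ
  intN : ∃ N₁ : ℕ, ∀ N₀ : ℕ, N₁ ≤ N₀ →
    IntNear fun z => W z * ENNReal.ofReal (‖z‖ ^ (2 * N₀)) * wexp (-2) Φ z
  nonint : ¬ IntNear fun z => W z * wexp (-2) Φ z
  maximal : ∀ φ' : Cn n → EReal, PSHNear φ' → leO Φ φ' →
    (¬ IntNear fun z => W z * wexp (-2) φ' z) → eqO φ' Φ

/-- `Φ` is a local Zhou weight related to `|f₀|² e^{-2φ₀}` near the origin (including the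
standing assumptions that `f₀` is a tuple of holomorphic functions near `o`, `φ₀` is
plurisubharmonic near `o`, and `|f₀|² e^{-2φ₀}` is integrable near `o`). -/
structure IsLocalZhouWeight {m : ℕ} (f₀ : Fin m → Cn n → ℂ) (φ₀ : Cn n → EReal)
    (Φ : Cn n → EReal) : Prop where
  holo : ∀ j, HoloNear (f₀ j)
  psh₀ : PSHNear φ₀
  int₀ : IntNear (dens0 f₀ φ₀)
  zhou : IsZhouWeightFor (dens0 f₀ φ₀) Φ

/-- The Zhou number (relative type) `σ(ψ, Φ) = sup { b ≥ 0 : ψ ≤ bΦ + O(1) near o }`. -/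
def zhouNumber (ψ Φ : Cn n → EReal) : ℝ :=
  sSup {b : ℝ | 0 ≤ b ∧ leO ψ fun z => (b : EReal) * Φ z}

/-- `log ‖f‖ : ℂⁿ → EReal`. -/
def logAbs (f : Cn n → ℂ) (z : Cn n) : EReal := elog ‖f z‖

/-- `ν(f, Φ) = σ(log|f|, Φ)`. -/
def nuNumber (f : Cn n → ℂ) (Φ : Cn n → EReal) : ℝ := zhouNumber (logAbs f) Φ

/-- The jumping number `c_o^G(Φ) = sup { c ≥ 0 : |G|² e^{-2cΦ} integrable near o }`. -/
def jumping (G : Cn n → ℂ) (Φ : Cn n → EReal) : ℝ :=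
  sSup {c : ℝ | 0 ≤ c ∧ IntNear fun z => (‖G z‖₊ : ℝ≥0∞) ^ 2 * wexp (-2 * c) Φ z}

/-- The inclusion `ℐ(φ)ₒ ⊆ ℐ(ψ)ₒ` of multiplier ideals at the origin. -/
def mIdealLE (φ ψ : Cn n → EReal) : Prop :=
  ∀ f : Cn n → ℂ, HoloNear f →
    (IntNear fun z => (‖f z‖₊ : ℝ≥0∞) ^ 2 * wexp (-2) φ z) →
    IntNear fun z => (‖f z‖₊ : ℝ≥0∞) ^ 2 * wexp (-2) ψ z

/-- The Tian function `Tn(t; f, v, φ₀) = sup { c ≥ 0 : |f|^{2t} e^{-2cv - 2φ₀} integrable near o }`. -/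
def tian (t : ℝ) (f : Cn n → ℂ) (v φ₀ : Cn n → EReal) : ℝ :=
  sSup {c : ℝ | 0 ≤ c ∧
    IntNear fun z => ENNReal.ofReal (‖f z‖ ^ (2 * t)) * wexp (-2 * c) v z * wexp (-2) φ₀ z}

/-- The set of exponents `c` such that `g² e^{2(tv - cu)}` is integrable near the origin. -/
def AuvSet (g u v : Cn n → ℝ) (t : ℝ) : Set ℝ :=
  {c : ℝ | ∃ U ∈ 𝓝 (0 : Cn n),
    IntegrableOn (fun z => g z ^ 2 * Real.exp (2 * (t * v z - c * u z))) U}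

/-- `A_{u,v}(t) = sup { c : g² e^{2(tv - cu)} integrable near o }`. -/
def Auv (g u v : Cn n → ℝ) (t : ℝ) : ℝ := sSup (AuvSet g u v t)

namespace St13

variable {n : ℕ} {g u v : Cn n → ℝ}

/-- The integrand of `AuvSet`. -/
def E (g u v : Cn n → ℝ) (t c : ℝ) : Cn n → ℝ :=
  fun z => g z ^ 2 * Real.exp (2 * (t * v z - c * u z))

lemma mem_iff {t c : ℝ} :
    c ∈ AuvSet g u v t ↔ ∃ U ∈ 𝓝 (0 : Cn n), IntegrableOn (E g u v t c) U := Iff.rfl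

lemma E_nonneg (t c : ℝ) (z : Cn n) : 0 ≤ E g u v t c z :=
  mul_nonneg (sq_nonneg _) (Real.exp_pos _).le

lemma E_meas (hu : Measurable u) (hv : Measurable v) (hg : Measurable g) (t c : ℝ) :
    Measurable (E g u v t c) :=
  (hg.pow_const 2).mul
    ((measurable_const.mul ((measurable_const.mul hv).sub (measurable_const.mul hu))).exp)

lemma mem_iff_open {t c : ℝ} : c ∈ AuvSet g u v t ↔
    ∃ U ∈ 𝓝 (0 : Cn n), IsOpen U ∧ IntegrableOn (E g u v t c) U := by
  rw [mem_iff]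
  constructor
  · rintro ⟨U, hU, hint⟩
    rcases mem_nhds_iff.1 hU with ⟨O, hOU, hO, h0⟩
    exact ⟨O, hO.mem_nhds h0, hO, hint.mono_set hOU⟩
  · rintro ⟨U, hU, _, hint⟩; exact ⟨U, hU, hint⟩

lemma E_interp {t₁ c₁ t₂ c₂ α : ℝ} (hα : 0 < α) (hα1 : α < 1) (z : Cn n) :
    E g u v (α*t₁+(1-α)*t₂) (α*c₁+(1-α)*c₂) z
      = (E g u v t₁ c₁ z) ^ α * (E g u v t₂ c₂ z) ^ (1-α) := by
  unfold E
  rw [Real.mul_rpow (sq_nonneg _) (Real.exp_pos _).le,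
      Real.mul_rpow (sq_nonneg _) (Real.exp_pos _).le,
      ← Real.exp_mul, ← Real.exp_mul, mul_mul_mul_comm,
      ← Real.rpow_add' (sq_nonneg _) (by norm_num : α + (1-α) ≠ 0),
      ← Real.exp_add]
  have : α + (1 - α) = 1 := by ring
  rw [this, Real.rpow_one]
  congr 1
  ring

lemma integrableOn_iff {f : Cn n → ℝ} (hf : Measurable f) (h0 : ∀ z, 0 ≤ f z) {s : Set (Cn n)} :
    IntegrableOn f s ↔ (∫⁻ z in s, ENNReal.ofReal (f z)) < ⊤ := by
  rw [IntegrableOn, ← lintegral_ofReal_ne_top_iff_integrable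
    hf.aestronglyMeasurable.restrict (ae_of_all _ h0), lt_top_iff_ne_top]

lemma holder (hu : Measurable u) (hv : Measurable v) (hg : Measurable g)
    {t₁ c₁ t₂ c₂ α : ℝ} (hα : 0 < α) (hα1 : α < 1) {W : Set (Cn n)}
    (h₁ : IntegrableOn (E g u v t₁ c₁) W) (h₂ : IntegrableOn (E g u v t₂ c₂) W) :
    IntegrableOn (E g u v (α*t₁+(1-α)*t₂) (α*c₁+(1-α)*c₂)) W := by
  have hα1' : 0 < 1 - α := by linarith
  rw [integrableOn_iff (E_meas hu hv hg _ _) (E_nonneg _ _)] at h₁ h₂ ⊢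
  set F₁ : Cn n → ℝ≥0∞ := fun z => ENNReal.ofReal (E g u v t₁ c₁ z) with hF₁
  set F₂ : Cn n → ℝ≥0∞ := fun z => ENNReal.ofReal (E g u v t₂ c₂ z) with hF₂
  have key : (∫⁻ z in W, ENNReal.ofReal (E g u v (α*t₁+(1-α)*t₂) (α*c₁+(1-α)*c₂) z))
      = ∫⁻ z in W, ((fun z => F₁ z ^ α) * (fun z => F₂ z ^ (1-α))) z := by
    refine lintegral_congr fun z => ?_
    rw [E_interp hα hα1, ENNReal.ofReal_mul (Real.rpow_nonneg (E_nonneg _ _ _) _),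
      ← ENNReal.ofReal_rpow_of_nonneg (E_nonneg _ _ _) hα.le,
      ← ENNReal.ofReal_rpow_of_nonneg (E_nonneg _ _ _) hα1'.le]
    rfl
  rw [key]
  have hpq : Real.HolderConjugate (1/α) (1/(1-α)) := by
    rw [Real.holderConjugate_iff]
    constructor
    · rw [lt_div_iff₀ hα]; linarith
    · rw [one_div, one_div, inv_inv, inv_inv]; ring
  have hm₁ : AEMeasurable (fun z => F₁ z ^ α) (volume.restrict W) :=
    ((E_meas hu hv hg t₁ c₁).ennreal_ofReal.pow measurable_const).aemeasurable
  have hm₂ : AEMeasurable (fun z => F₂ z ^ (1-α)) (volume.restrict W) :=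
    ((E_meas hu hv hg t₂ c₂).ennreal_ofReal.pow measurable_const).aemeasurable
  calc (∫⁻ z in W, ((fun z => F₁ z ^ α) * (fun z => F₂ z ^ (1-α))) z)
      ≤ (∫⁻ z in W, (F₁ z ^ α) ^ (1/α)) ^ (1/(1/α))
        * (∫⁻ z in W, (F₂ z ^ (1-α)) ^ (1/(1-α))) ^ (1/(1/(1-α))) :=
        ENNReal.lintegral_mul_le_Lp_mul_Lq _ hpq hm₁ hm₂
    _ = (∫⁻ z in W, F₁ z) ^ α * (∫⁻ z in W, F₂ z) ^ (1-α) := by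
        rw [one_div_one_div, one_div_one_div]
        congr 1 <;> [skip; skip] <;>
        · congr 1
          refine lintegral_congr fun z => ?_
          rw [← ENNReal.rpow_mul]
          first
          | rw [mul_one_div_cancel hα.ne', ENNReal.rpow_one]
          | rw [mul_one_div_cancel hα1'.ne', ENNReal.rpow_one]
    _ < ⊤ := ENNReal.mul_lt_top
        (ENNReal.rpow_lt_top_of_nonneg hα.le h₁.ne)
        (ENNReal.rpow_lt_top_of_nonneg hα1'.le h₂.ne)

lemma integrableOn_mono {F G : Cn n → ℝ} (hF : Measurable F) (hF0 : ∀ z, 0 ≤ F z)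
    (hle : ∀ z, F z ≤ G z) {U : Set (Cn n)} (hG : IntegrableOn G U) : IntegrableOn F U :=
  hG.mono' hF.aestronglyMeasurable
    (ae_of_all _ fun z => by rw [Real.norm_eq_abs, abs_of_nonneg (hF0 z)]; exact hle z)

lemma mem_of_le (hu : Measurable u) (hv : Measurable v) (hg : Measurable g)
    (hub : ∃ M : ℝ, ∀ᶠ z in 𝓝 (0 : Cn n), u z ≤ M)
    {t c c' : ℝ} (hc : c ∈ AuvSet g u v t) (hcc : c' ≤ c) : c' ∈ AuvSet g u v t := by
  obtain ⟨M, hM⟩ := hub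
  rcases mem_iff_open.1 hc with ⟨U, hU, hUo, hint⟩
  have hV : {z : Cn n | u z ≤ M} ∈ 𝓝 (0 : Cn n) := hM
  refine mem_iff.2 ⟨U ∩ {z | u z ≤ M}, inter_mem hU hV, ?_⟩
  have hmeas : MeasurableSet (U ∩ {z : Cn n | u z ≤ M}) :=
    hUo.measurableSet.inter (measurableSet_le hu measurable_const)
  refine Integrable.mono'
    ((hint.mono_set Set.inter_subset_left).const_mul (Real.exp (2*(c-c')*M)))
    (E_meas hu hv hg t c').aestronglyMeasurable ?_
  rw [ae_restrict_iff' hmeas]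
  refine ae_of_all _ fun z hz => ?_
  rw [Real.norm_eq_abs, abs_of_nonneg (E_nonneg _ _ _)]
  have hzM : u z ≤ M := hz.2
  have hmul := mul_le_mul_of_nonneg_left hzM (show (0:ℝ) ≤ c - c' by linarith)
  calc E g u v t c' z = g z ^ 2 * Real.exp (2 * (t * v z - c' * u z)) := rfl
    _ ≤ g z ^ 2 * Real.exp (2 * (t * v z - c * u z) + 2*(c-c')*M) :=
        mul_le_mul_of_nonneg_left (Real.exp_le_exp.2 (by nlinarith)) (sq_nonneg _)
    _ = Real.exp (2*(c-c')*M) * E g u v t c z := by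
        rw [Real.exp_add]; unfold E; ring

/-- Interpolation membership via Hölder. -/
lemma mem_interp (hu : Measurable u) (hv : Measurable v) (hg : Measurable g)
    {t₁ c₁ t₂ c₂ α : ℝ} (hα : 0 < α) (hα1 : α < 1)
    (h₁ : c₁ ∈ AuvSet g u v t₁) (h₂ : c₂ ∈ AuvSet g u v t₂) :
    α*c₁+(1-α)*c₂ ∈ AuvSet g u v (α*t₁+(1-α)*t₂) := by
  rcases mem_iff.1 h₁ with ⟨U₁, hU₁, hint₁⟩
  rcases mem_iff.1 h₂ with ⟨U₂, hU₂, hint₂⟩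
  exact mem_iff.2 ⟨U₁ ∩ U₂, inter_mem hU₁ hU₂,
    holder hu hv hg hα hα1 (hint₁.mono_set Set.inter_subset_left)
      (hint₂.mono_set Set.inter_subset_right)⟩

/-- The key pointwise bound for the weight `max u (b⁻¹ v)`. -/
lemma Eh_le {b s τ t₀ : ℝ} (hb : 0 < b) (hs : 0 ≤ s) (hτ : τ ≤ t₀) (z : Cn n) :
    E g (fun z => max (u z) (b⁻¹ * v z)) v t₀ (s + b*(t₀-τ)) z ≤ E g u v τ s z := by
  refine mul_le_mul_of_nonneg_left (Real.exp_le_exp.2 ?_) (sq_nonneg _)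
  set h := max (u z) (b⁻¹ * v z) with hh
  have h1 : u z ≤ h := le_max_left _ _
  have h2 : b⁻¹ * v z ≤ h := le_max_right _ _
  have hbb : b * b⁻¹ = 1 := mul_inv_cancel₀ hb.ne'
  have fact1 : s * u z ≤ s * h := mul_le_mul_of_nonneg_left h1 hs
  have fact2 : (t₀ - τ) * v z ≤ (b*(t₀-τ)) * h := by
    have e : (b*(t₀-τ))*(b⁻¹*(v z)) = (t₀-τ)*(v z) := by
      rw [show (b*(t₀-τ))*(b⁻¹*(v z)) = (b*b⁻¹)*((t₀-τ)*(v z)) from by ring, hbb, one_mul]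
    rw [← e]
    exact mul_le_mul_of_nonneg_left h2 (mul_nonneg hb.le (by linarith))
  nlinarith [fact1, fact2]

end St13

set_option maxHeartbeats 4000000



/-- concavity of `A_{u,v}`, existence of its left derivative `b₀` at `t₀`,
and the characterization `A_{max{u,(1/b)v},v}(t₀) = A_{u,v}(t₀) ↔ b ≤ b₀`. -/
theorem statement13 {n : ℕ} (D : Set (Cn n)) (hD : IsOpen D) (hDconn : IsConnected D)
    (hDb : Bornology.IsBounded D) (h0 : (0 : Cn n) ∈ D)
    (u v g : Cn n → ℝ) (hu : Measurable u) (hv : Measurable v) (hg : Measurable g)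
    (hub : ∃ M : ℝ, ∀ᶠ z in 𝓝 (0 : Cn n), u z ≤ M)
    (hvb : ∃ M : ℝ, ∀ᶠ z in 𝓝 (0 : Cn n), v z ≤ M)
    (hgpos : ∀ z ∈ D, 0 ≤ g z)
    (t₀ δ : ℝ) (hδ : 0 < δ)
    (hfin : ∀ t ∈ Set.Ioo (t₀ - δ) (t₀ + δ),
      (AuvSet g u v t).Nonempty ∧ BddAbove (AuvSet g u v t) ∧ 0 < Auv g u v t)
    (hmono : StrictMonoOn (Auv g u v) (Set.Ioo (t₀ - δ) (t₀ + δ))) :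
    ConcaveOn ℝ (Set.Ioo (t₀ - δ) (t₀ + δ)) (Auv g u v) ∧
    ∃ b₀ : ℝ,
      Tendsto (fun Δt : ℝ => (Auv g u v (t₀ + Δt) - Auv g u v t₀) / Δt)
        (𝓝[<] (0 : ℝ)) (𝓝 b₀) ∧
      ∀ b : ℝ, 0 < b →
        (Auv g (fun z => max (u z) (b⁻¹ * v z)) v t₀ = Auv g u v t₀ ↔ b ≤ b₀) := by
  classical
  have hδ0 : δ ≠ 0 := hδ.ne'
  have ht₀I : t₀ ∈ Set.Ioo (t₀ - δ) (t₀ + δ) := Set.mem_Ioo.mpr ⟨by linarith, by linarith⟩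
  have hne : ∀ t ∈ Set.Ioo (t₀ - δ) (t₀ + δ), (AuvSet g u v t).Nonempty :=
    fun t ht => (hfin t ht).1
  have hbdd : ∀ t ∈ Set.Ioo (t₀ - δ) (t₀ + δ), BddAbove (AuvSet g u v t) :=
    fun t ht => (hfin t ht).2.1
  have hpos : ∀ t ∈ Set.Ioo (t₀ - δ) (t₀ + δ), 0 < Auv g u v t := fun t ht => (hfin t ht).2.2
  have memle : ∀ t ∈ Set.Ioo (t₀ - δ) (t₀ + δ), ∀ c ∈ AuvSet g u v t, c ≤ Auv g u v t :=
    fun t ht c hc => le_csSup (hbdd t ht) hc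
  have ltmem : ∀ t ∈ Set.Ioo (t₀ - δ) (t₀ + δ), ∀ x : ℝ, x < Auv g u v t →
      x ∈ AuvSet g u v t := by
    intro t ht x hx
    obtain ⟨c, hcS, hxc⟩ := exists_lt_of_lt_csSup (hne t ht) hx
    exact St13.mem_of_le hu hv hg hub hcS hxc.le
  -- Concavity of `Auv` on the interval.
  have hconc : ConcaveOn ℝ (Set.Ioo (t₀ - δ) (t₀ + δ)) (Auv g u v) := by
    refine ⟨convex_Ioo _ _, fun x hx y hy a b ha hb hab => ?_⟩
    rcases eq_or_lt_of_le ha with rfl | ha'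
    · rw [show b = 1 by linarith]; simp
    rcases eq_or_lt_of_le hb with rfl | hb'
    · rw [show a = 1 by linarith]; simp
    have hb1 : b = 1 - a := by linarith
    have ha1 : a < 1 := by linarith
    subst hb1
    have hxyI : a • x + (1-a) • y ∈ Set.Ioo (t₀ - δ) (t₀ + δ) :=
      (convex_Ioo (t₀ - δ) (t₀ + δ)) hx hy ha hb hab
    simp only [smul_eq_mul] at hxyI ⊢
    refine le_of_forall_pos_le_add fun ε hε => ?_
    have h₁ : Auv g u v x - ε ∈ AuvSet g u v x := ltmem x hx _ (by linarith)
    have h₂ : Auv g u v y - ε ∈ AuvSet g u v y := ltmem y hy _ (by linarith)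
    have hmem := St13.mem_interp hu hv hg ha' ha1 h₁ h₂
    have hle := memle _ hxyI _ hmem
    nlinarith [hle]
  -- Secant slopes of the concave function.
  have hNconv : ConvexOn ℝ (Set.Ioo (t₀ - δ) (t₀ + δ)) (-(Auv g u v)) := hconc.neg
  have hsec : ∀ x ∈ Set.Ioo (t₀ - δ) (t₀ + δ), ∀ y ∈ Set.Ioo (t₀ - δ) (t₀ + δ),
      x ≠ t₀ → y ≠ t₀ → x ≤ y →
      (Auv g u v t₀ - Auv g u v x)/(x - t₀) ≤ (Auv g u v t₀ - Auv g u v y)/(y - t₀) := by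
    intro x hx y hy hx0 hy0 hxy
    have h := hNconv.secant_mono ht₀I hx hy hx0 hy0 hxy
    simp only [Pi.neg_apply, neg_sub_neg] at h
    exact h
  set pf : ℝ → ℝ :=
    fun Δ => (Auv g u v t₀ - Auv g u v (t₀ + max Δ (-(δ/2)))) / (max Δ (-(δ/2))) with hpfdef
  have hmaxlt : ∀ Δ : ℝ, Δ < 0 → -(δ/2) ≤ max Δ (-(δ/2)) ∧ max Δ (-(δ/2)) < 0 :=
    fun Δ h => ⟨le_max_right _ _, max_lt h (by linarith)⟩
  have hmemI : ∀ m : ℝ, -(δ/2) ≤ m → m < 0 → t₀ + m ∈ Set.Ioo (t₀ - δ) (t₀ + δ) :=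
    fun m h1 h2 => Set.mem_Ioo.mpr ⟨by linarith, by linarith⟩
  have hpfmono : MonotoneOn pf (Set.Iio (0:ℝ)) := by
    intro Δ₁ h1 Δ₂ h2 h12
    obtain ⟨ha1, hb1⟩ := hmaxlt Δ₁ h1
    obtain ⟨ha2, hb2⟩ := hmaxlt Δ₂ h2
    have h := hsec _ (hmemI _ ha1 hb1) _ (hmemI _ ha2 hb2)
      (by intro hh; rw [add_eq_left] at hh; exact hb1.ne hh)
      (by intro hh; rw [add_eq_left] at hh; exact hb2.ne hh)
      (by have := max_le_max h12 (le_refl (-(δ/2))); linarith)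
    simp only [add_sub_cancel_left] at h
    simpa only [hpfdef] using h
  have hpfbdd : BddAbove (pf '' Set.Iio 0) := by
    refine ⟨(Auv g u v t₀ - Auv g u v (t₀ + δ/2))/(δ/2), ?_⟩
    rintro y ⟨Δ, hΔ, rfl⟩
    obtain ⟨ha1, hb1⟩ := hmaxlt Δ hΔ
    have h := hsec _ (hmemI _ ha1 hb1) (t₀ + δ/2)
      (Set.mem_Ioo.mpr ⟨by linarith, by linarith⟩)
      (by intro hh; rw [add_eq_left] at hh; exact hb1.ne hh)
      (by intro hh; rw [add_eq_left] at hh; linarith)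
      (by linarith)
    simp only [add_sub_cancel_left] at h
    simpa only [hpfdef] using h
  have hIione : ((-1:ℝ)) ∈ Set.Iio (0:ℝ) := by norm_num
  have hpfne : (pf '' Set.Iio 0).Nonempty := ⟨pf (-1), Set.mem_image_of_mem pf hIione⟩
  set b₀ := -sSup (pf '' Set.Iio 0) with hb₀def
  -- the left-derivative limit
  have htend : Tendsto (fun Δt : ℝ => (Auv g u v (t₀ + Δt) - Auv g u v t₀) / Δt)
      (𝓝[<] (0 : ℝ)) (𝓝 b₀) := by
    have h1 := hpfmono.tendsto_nhdsLT hpfbdd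
    have h2 : Tendsto (fun Δ => -pf Δ) (𝓝[<] (0:ℝ)) (𝓝 b₀) := by
      rw [hb₀def]; exact h1.neg
    refine h2.congr' ?_
    filter_upwards [Ioo_mem_nhdsLT (by linarith : -(δ/2) < (0:ℝ))] with Δ hΔ
    have hm : max Δ (-(δ/2)) = Δ := max_eq_left hΔ.1.le
    simp only [hpfdef, hm]
    rw [← neg_div, neg_sub]
  -- fact (i): slopes to the left are at least `b₀`
  have fact_i : ∀ Δ : ℝ, 0 < Δ → Δ < δ/2 →
      b₀ * Δ ≤ Auv g u v t₀ - Auv g u v (t₀ - Δ) := by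
    intro Δ h0 h2
    have hmΔ : max (-Δ) (-(δ/2)) = -Δ := max_eq_left (by linarith)
    have hmem : pf (-Δ) ≤ sSup (pf '' Set.Iio 0) :=
      le_csSup hpfbdd (Set.mem_image_of_mem pf (by simpa using h0))
    have heval : pf (-Δ) = (Auv g u v t₀ - Auv g u v (t₀ - Δ)) / (-Δ) := by
      simp only [hpfdef, hmΔ, ← sub_eq_add_neg]
    rw [heval, div_neg] at hmem
    have hb₀le : b₀ ≤ (Auv g u v t₀ - Auv g u v (t₀ - Δ)) / Δ := by
      rw [hb₀def]; linarith
    exact (le_div_iff₀ h0).1 hb₀le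
  -- fact (ii): if `b₀ < b` then some left slope is `< b`
  have fact_ii : ∀ b : ℝ, b₀ < b → ∃ τ ∈ Set.Ioo (t₀ - δ) (t₀ + δ),
      τ < t₀ ∧ Auv g u v t₀ < Auv g u v τ + b * (t₀ - τ) := by
    intro b hbgt
    have hlt : -b < sSup (pf '' Set.Iio 0) := by rw [hb₀def] at hbgt; linarith
    obtain ⟨y, ⟨Δ, hΔ, rfl⟩, hy⟩ := exists_lt_of_lt_csSup hpfne hlt
    obtain ⟨ha1, hb1⟩ := hmaxlt Δ hΔ
    refine ⟨t₀ + max Δ (-(δ/2)), hmemI _ ha1 hb1, by linarith, ?_⟩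
    have heval : pf Δ = (Auv g u v t₀ - Auv g u v (t₀ + max Δ (-(δ/2)))) / (max Δ (-(δ/2))) := by
      simp only [hpfdef]
    rw [heval] at hy
    rw [lt_div_iff_of_neg hb1] at hy
    nlinarith [hy]
  refine ⟨hconc, b₀, htend, fun b hb => ?_⟩
  have hbne : b ≠ 0 := hb.ne'
  constructor
  · -- `A_h(t₀) = A(t₀) → b ≤ b₀`
    intro hEq
    by_contra hbgt
    push_neg at hbgt
    obtain ⟨τ, hτI, hτlt, hA⟩ := fact_ii b hbgt
    by_cases hBdd : BddAbove (AuvSet g (fun z => max (u z) (b⁻¹ * v z)) v t₀)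
    · have hxlt : max (Auv g u v t₀ - b*(t₀ - τ)) 0 < Auv g u v τ :=
        max_lt (by linarith) (hpos τ hτI)
      obtain ⟨cs, hcsS, hcsx⟩ := exists_lt_of_lt_csSup (hne τ hτI) hxlt
      have hcs0 : 0 ≤ cs := le_trans (le_max_right _ _) hcsx.le
      have hmemh : cs + b*(t₀-τ) ∈ AuvSet g (fun z => max (u z) (b⁻¹ * v z)) v t₀ := by
        rcases hcsS with ⟨U, hU, hint⟩
        exact ⟨U, hU, St13.integrableOn_mono
          (St13.E_meas (hu.max (measurable_const.mul hv)) hv hg t₀ (cs + b*(t₀-τ)))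
          (St13.E_nonneg _ _) (fun z => St13.Eh_le hb hcs0 hτlt.le z) hint⟩
      have hle2 : cs + b*(t₀-τ) ≤ Auv g u v t₀ := by
        rw [← hEq]; exact le_csSup hBdd hmemh
      have := le_max_left (Auv g u v t₀ - b*(t₀ - τ)) 0
      linarith
    · have h0' : Auv g (fun z => max (u z) (b⁻¹ * v z)) v t₀ = 0 :=
        Real.sSup_of_not_bddAbove hBdd
      rw [h0'] at hEq
      have := hpos t₀ ht₀I
      linarith
  · -- `b ≤ b₀ → A_h(t₀) = A(t₀)`
    intro hble
    -- the hard upper bound for members of the max-weight set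
    have hard : ∀ c ∈ AuvSet g (fun z => max (u z) (b⁻¹ * v z)) v t₀, c ≤ Auv g u v t₀ := by
      intro c hc
      by_contra hltc
      push_neg at hltc
      set A₀ := Auv g u v t₀ with hA₀def
      have hA₀pos : 0 < A₀ := hpos t₀ ht₀I
      have hcpos : 0 < c := lt_trans hA₀pos hltc
      have hτ'I : t₀ - δ/2 ∈ Set.Ioo (t₀ - δ) (t₀ + δ) :=
        Set.mem_Ioo.mpr ⟨by linarith, by linarith⟩
      have hAτ' : Auv g u v (t₀ - δ/2) < A₀ := hmono hτ'I ht₀I (by linarith)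
      set S' := (A₀ - Auv g u v (t₀ - δ/2)) / (δ/2) with hS'def
      have hS' : 0 < S' := div_pos (by linarith) (by linarith)
      set ε₀ := min (δ/4) (c/(2*b)) with hε₀def
      have hε₀ : 0 < ε₀ := lt_min (by linarith) (div_pos hcpos (by linarith))
      set b' := b + 1 + S' + (c - A₀)*(2/δ) + (c - A₀)/ε₀ + A₀*b/c with hb'def
      have hterm1 : 0 < (c - A₀)*(2/δ) := mul_pos (by linarith) (by positivity)
      have hterm2 : 0 < (c - A₀)/ε₀ := div_pos (by linarith) hε₀
      have hterm3 : 0 < A₀*b/c := div_pos (mul_pos hA₀pos hb) hcpos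
      have hb'b : b < b' := by rw [hb'def]; linarith
      have hI1 : S' * (δ/2) + (c - A₀) < b' * (δ/2) := by
        rw [hb'def]
        have e : (c - A₀)*(2/δ)*(δ/2) = c - A₀ := by field_simp
        nlinarith [mul_pos (show (0:ℝ) < b + 1 + (c - A₀)/ε₀ + A₀*b/c by linarith)
          (show (0:ℝ) < δ/2 by linarith)]
      have hden : 0 < b'*c - A₀*b := by
        rw [hb'def]
        have e2 : A₀*b/c * c = A₀*b := div_mul_cancel₀ _ hcpos.ne'
        nlinarith [mul_pos (show (0:ℝ) < b + 1 + S' + (c - A₀)*(2/δ) + (c - A₀)/ε₀ by linarith)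
          hcpos]
      set L := c*(c - A₀)/(b'*c - A₀*b) with hLdef
      have hL : 0 < L := div_pos (mul_pos hcpos (by linarith)) hden
      have hLε : L < ε₀ := by
        rw [hLdef, div_lt_iff₀ hden, hb'def]
        have e1 : (c - A₀)/ε₀ * ε₀ = c - A₀ := div_mul_cancel₀ _ hε₀.ne'
        have e2 : A₀*b/c * c = A₀*b := div_mul_cancel₀ _ hcpos.ne'
        nlinarith [mul_pos (mul_pos hε₀ hcpos)
          (show (0:ℝ) < b + 1 + S' + (c - A₀)*(2/δ) by linarith)]
      set Ub := (c - A₀)/(b' - b) with hUbdef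
      have hUb : 0 < Ub := div_pos (by linarith) (by linarith)
      have hLU : L < Ub := by
        rw [hLdef, hUbdef, div_lt_div_iff₀ hden (by linarith)]
        nlinarith [mul_pos (mul_pos (show (0:ℝ) < c - A₀ by linarith)
          (show (0:ℝ) < c - A₀ by linarith)) hb]
      set Δ := min ((L+Ub)/2) ε₀ with hΔdef
      have hΔL : L < Δ := by rw [hΔdef]; exact lt_min (by linarith) hLε
      have hΔU : Δ < Ub := by
        rw [hΔdef]; exact lt_of_le_of_lt (min_le_left _ _) (by linarith)
      have hΔpos : 0 < Δ := lt_trans hL hΔL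
      have hΔδ : Δ < δ/2 := by
        rw [hΔdef]
        exact lt_of_le_of_lt (le_trans (min_le_right _ _) (min_le_left _ _)) (by linarith)
      have hΔcb : Δ < c/b := by
        have h1 : Δ ≤ c/(2*b) := by rw [hΔdef]; exact le_trans (min_le_right _ _) (min_le_right _ _)
        have h2 : c/(2*b) < c/b := by rw [div_lt_div_iff₀ (by linarith) hb]; nlinarith
        linarith
      have hΔbc : Δ*b < c := by
        have := (lt_div_iff₀ hb).1 hΔcb; linarith
      have hτI : t₀ - Δ ∈ Set.Ioo (t₀ - δ) (t₀ + δ) :=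
        Set.mem_Ioo.mpr ⟨by linarith, by linarith⟩
      -- membership of the two auxiliary exponents
      have hs₂mem : c - b'*(δ/2) ∈ AuvSet g u v (t₀ - δ/2) := by
        refine ltmem _ hτ'I _ ?_
        have e3 : S' * (δ/2) = A₀ - Auv g u v (t₀ - δ/2) := by
          rw [hS'def]; field_simp
        linarith [hI1]
      have hαb : 0 < 1 - Δ*b/c := by
        have : Δ*b/c < 1 := (div_lt_one hcpos).2 hΔbc
        linarith
      have hs₃mem : (c - b'*Δ)/(1 - Δ*b/c) ∈ AuvSet g u v t₀ := by
        refine ltmem _ ht₀I _ ?_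
        rw [div_lt_iff₀ hαb]
        refine (mul_lt_mul_iff_of_pos_right hcpos).1 ?_
        have e8 : A₀*(1 - Δ*b/c)*c = A₀*c - A₀*(Δ*b) := by field_simp
        have hΔL' : c*(c-A₀) < Δ*(b'*c - A₀*b) := by
          rw [hLdef] at hΔL; exact (div_lt_iff₀ hden).1 hΔL
        rw [e8]
        nlinarith [hΔL']
      -- decompose the `max`-weight integrability over the region `R` and its complement
      rcases St13.mem_iff_open.1 hc with ⟨U₀, hU₀, hU₀o, hint₀⟩
      have hRmeas : MeasurableSet {z : Cn n | b⁻¹ * v z ≤ u z} :=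
        measurableSet_le (measurable_const.mul hv) hu
      have hR1 : IntegrableOn (St13.E g u v t₀ c)
          (U₀ ∩ {z : Cn n | b⁻¹ * v z ≤ u z}) := by
        refine (hint₀.mono_set Set.inter_subset_left).congr_fun (fun z hz => ?_)
          (hU₀o.measurableSet.inter hRmeas)
        show St13.E g (fun z => max (u z) (b⁻¹ * v z)) v t₀ c z = St13.E g u v t₀ c z
        unfold St13.E
        simp only [max_eq_left (show b⁻¹ * v z ≤ u z from hz.2)]
      have hR2 : IntegrableOn (St13.E g u v (t₀ - c*b⁻¹) 0)
          (U₀ ∩ {z : Cn n | b⁻¹ * v z ≤ u z}ᶜ) := by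
        refine (hint₀.mono_set Set.inter_subset_left).congr_fun (fun z hz => ?_)
          (hU₀o.measurableSet.inter hRmeas.compl)
        show St13.E g (fun z => max (u z) (b⁻¹ * v z)) v t₀ c z = St13.E g u v (t₀ - c*b⁻¹) 0 z
        unfold St13.E
        have hzlt : ¬ (b⁻¹ * v z ≤ u z) := hz.2
        simp only [max_eq_right (not_le.1 hzlt).le]
        have harg : 2*(t₀ * v z - c * (b⁻¹ * v z)) = 2*((t₀ - c*b⁻¹) * v z - 0 * u z) := by ring
        rw [harg]
      rcases St13.mem_iff_open.1 hs₂mem with ⟨U₂, hU₂, hU₂o, hint₂⟩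
      rcases St13.mem_iff_open.1 hs₃mem with ⟨U₃, hU₃, hU₃o, hint₃⟩
      have hVmem : U₀ ∩ (U₂ ∩ U₃) ∈ 𝓝 (0:Cn n) := inter_mem hU₀ (inter_mem hU₂ hU₃)
      -- Hölder on the region R
      have h0a : 0 < 1 - Δ/(δ/2) := by
        rw [sub_pos, div_lt_one (by linarith)]; exact hΔδ
      have h1a : 1 - Δ/(δ/2) < 1 := by
        have : 0 < Δ/(δ/2) := div_pos hΔpos (by linarith)
        linarith
      have hWa₁ : IntegrableOn (St13.E g u v t₀ c)
          ((U₀ ∩ (U₂ ∩ U₃)) ∩ {z : Cn n | b⁻¹ * v z ≤ u z}) :=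
        hR1.mono_set (fun z hz => ⟨hz.1.1, hz.2⟩)
      have hWa₂ : IntegrableOn (St13.E g u v (t₀-δ/2) (c - b'*(δ/2)))
          ((U₀ ∩ (U₂ ∩ U₃)) ∩ {z : Cn n | b⁻¹ * v z ≤ u z}) :=
        hint₂.mono_set (fun z hz => hz.1.2.1)
      have hIa := St13.holder hu hv hg h0a h1a hWa₁ hWa₂
      have e4 : (1 - Δ/(δ/2))*t₀ + (1-(1 - Δ/(δ/2)))*(t₀-δ/2) = t₀ - Δ := by
        field_simp; ring
      have e5 : (1 - Δ/(δ/2))*c + (1-(1 - Δ/(δ/2)))*(c - b'*(δ/2)) = c - b'*Δ := by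
        field_simp; ring
      rw [e4, e5] at hIa
      -- Hölder on the complement of R
      have h1b : 1 - Δ*b/c < 1 := by
        have : 0 < Δ*b/c := div_pos (mul_pos hΔpos hb) hcpos
        linarith
      have hWb₁ : IntegrableOn (St13.E g u v t₀ ((c - b'*Δ)/(1 - Δ*b/c)))
          ((U₀ ∩ (U₂ ∩ U₃)) ∩ {z : Cn n | b⁻¹ * v z ≤ u z}ᶜ) :=
        hint₃.mono_set (fun z hz => hz.1.2.2)
      have hWb₂ : IntegrableOn (St13.E g u v (t₀ - c*b⁻¹) 0)
          ((U₀ ∩ (U₂ ∩ U₃)) ∩ {z : Cn n | b⁻¹ * v z ≤ u z}ᶜ) :=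
        hR2.mono_set (fun z hz => ⟨hz.1.1, hz.2⟩)
      have hIb := St13.holder hu hv hg hαb h1b hWb₁ hWb₂
      have e6 : (1 - Δ*b/c)*t₀ + (1-(1 - Δ*b/c))*(t₀ - c*b⁻¹) = t₀ - Δ := by
        field_simp; ring
      have e7 : (1 - Δ*b/c)*((c - b'*Δ)/(1 - Δ*b/c)) + (1-(1 - Δ*b/c))*0 = c - b'*Δ := by
        rw [mul_zero, add_zero, mul_comm (1 - Δ*b/c), div_mul_cancel₀ _ (ne_of_gt hαb)]
      rw [e6, e7] at hIb
      -- combine the two regions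
      have hVint : IntegrableOn (St13.E g u v (t₀ - Δ) (c - b'*Δ)) (U₀ ∩ (U₂ ∩ U₃)) := by
        refine (hIa.union hIb).mono_set fun z hz => ?_
        by_cases hzR : z ∈ {z : Cn n | b⁻¹ * v z ≤ u z}
        · exact Or.inl ⟨hz, hzR⟩
        · exact Or.inr ⟨hz, hzR⟩
      have hsmem : c - b'*Δ ∈ AuvSet g u v (t₀ - Δ) :=
        St13.mem_iff.2 ⟨U₀ ∩ (U₂ ∩ U₃), hVmem, hVint⟩
      have hfinal1 : c - b'*Δ ≤ Auv g u v (t₀ - Δ) := memle _ hτI _ hsmem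
      have hfinal2 : b₀ * Δ ≤ A₀ - Auv g u v (t₀ - Δ) := fact_i Δ hΔpos hΔδ
      have hfinal3 : b * Δ ≤ b₀ * Δ := mul_le_mul_of_nonneg_right hble hΔpos.le
      have hcontra : Ub ≤ Δ := by
        rw [hUbdef, div_le_iff₀ (show (0:ℝ) < b' - b by linarith)]
        nlinarith [hfinal1, hfinal2, hfinal3]
      linarith
    -- assemble the equality
    have hA₀pos := hpos t₀ ht₀I
    have hSh_bdd : BddAbove (AuvSet g (fun z => max (u z) (b⁻¹ * v z)) v t₀) :=
      ⟨Auv g u v t₀, fun c hc => hard c hc⟩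
    have hhalf : Auv g u v t₀ / 2 ∈ AuvSet g (fun z => max (u z) (b⁻¹ * v z)) v t₀ := by
      have hmem : Auv g u v t₀/2 ∈ AuvSet g u v t₀ := ltmem t₀ ht₀I _ (by linarith)
      rcases hmem with ⟨U, hU, hint⟩
      refine ⟨U, hU, St13.integrableOn_mono
        (St13.E_meas (hu.max (measurable_const.mul hv)) hv hg t₀ (Auv g u v t₀ / 2))
        (St13.E_nonneg _ _) (fun z => ?_) hint⟩
      have h := St13.Eh_le (g := g) (u := u) (v := v) (τ := t₀) hb
        (show (0:ℝ) ≤ Auv g u v t₀/2 by linarith) (le_refl t₀) z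
      simp only [sub_self, mul_zero, add_zero] at h
      exact h
    refine le_antisymm (csSup_le ⟨_, hhalf⟩ hard) (le_of_forall_lt fun x hx => ?_)
    have hmx : max x 0 < Auv g u v t₀ := max_lt hx hA₀pos
    obtain ⟨cx, hcxS, hcx⟩ := exists_lt_of_lt_csSup (hne t₀ ht₀I) hmx
    have hcx0 : 0 ≤ cx := le_trans (le_max_right _ _) hcx.le
    have hcxh : cx ∈ AuvSet g (fun z => max (u z) (b⁻¹ * v z)) v t₀ := by
      rcases hcxS with ⟨U, hU, hint⟩
      refine ⟨U, hU, St13.integrableOn_mono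
        (St13.E_meas (hu.max (measurable_const.mul hv)) hv hg t₀ cx)
        (St13.E_nonneg _ _) (fun z => ?_) hint⟩
      have h := St13.Eh_le (g := g) (u := u) (v := v) (τ := t₀) hb hcx0 (le_refl t₀) z
      simp only [sub_self, mul_zero, add_zero] at h
      exact h
    calc x ≤ max x 0 := le_max_left _ _
      _ < cx := hcx
      _ ≤ Auv g (fun z => max (u z) (b⁻¹ * v z)) v t₀ := le_csSup hSh_bdd hcxh
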